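/- Let α, β be positive odd integers, ω ∈ ℤ, η ≥ 0 an integer, D̃ = {(0,0)ᵗ, (α,0)ᵗ, (ω, 2^η β)ᵗ, (−α−ω, −2^η β)ᵗ} ⊂ ℤ², M̃ ∈ M₂(ℤ) an expansive integer matrix, and A = 2^{η+1}αβ·I. Let Λ ⊂ ℤ² be a spectrum of the Moran measure μ_{A,M̃,D̃} with 0 ∈ Λ. For s ∈ S_η and ℓ ∈ T_η define Λ_{s,ℓ} = {γ ∈ ℤ² : s + 2^{η+1}αβ·ℓ + 2^{η+1}αβ·γ ∈ Λ}. If Λ_{s,ℓ} is nonempty, then Λ_{s,ℓ} is an orthogonal set of the self-affine measure μ_{M̃,D̃}. -/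

import Mathlib

open MeasureTheory Matrix Complex
open scoped ENNReal

noncomputable section

/-- The exponential function `x ↦ e^{2πi⟨l,x⟩}` on `Fin n → ℝ`. -/
def expChar {n : ℕ} (l x : Fin n → ℝ) : ℂ :=
  Complex.exp (2 * Real.pi * Complex.I * Complex.ofReal (∑ i, l i * x i))

/-- `Λ` is an orthogonal set of `μ`: the exponentials `e^{2πi⟨λ,·⟩}`, `λ ∈ Λ`,
form an orthonormal family in `L²(μ)`. -/
def IsOrthogonalSet {n : ℕ} (μ : Measure (Fin n → ℝ)) (Λ : Set (Fin n → ℝ)) : Prop :=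
  ∃ b : Λ → Lp ℂ 2 μ,
    (∀ l : Λ, (b l : (Fin n → ℝ) → ℂ) =ᵐ[μ] expChar (l : Fin n → ℝ)) ∧
    Orthonormal ℂ b

/-- `Λ` is a spectrum of `μ`: the exponentials `e^{2πi⟨λ,·⟩}`, `λ ∈ Λ`,
form an orthonormal basis (orthonormal and total) of `L²(μ)`. -/
def IsSpectrum {n : ℕ} (μ : Measure (Fin n → ℝ)) (Λ : Set (Fin n → ℝ)) : Prop :=
  ∃ b : Λ → Lp ℂ 2 μ,
    (∀ l : Λ, (b l : (Fin n → ℝ) → ℂ) =ᵐ[μ] expChar (l : Fin n → ℝ)) ∧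
    Orthonormal ℂ b ∧
    (Submodule.span ℂ (Set.range b)).topologicalClosure = ⊤

/-- `μ` is a spectral measure : some countable `Λ` is a spectrum of `μ`. -/
def IsSpectralMeasure {n : ℕ} (μ : Measure (Fin n → ℝ)) : Prop :=
  ∃ Λ : Set (Fin n → ℝ), Λ.Countable ∧ IsSpectrum μ Λ

/-- A real matrix is expansive if all of its (complex) eigenvalues have modulus `> 1`. -/
def Expansive {n : ℕ} (M : Matrix (Fin n) (Fin n) ℝ) : Prop :=
  ∀ z : ℂ, (M.map (Complex.ofReal)).charpoly.IsRoot z → 1 < ‖z‖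

/-- `μ` is the self-affine measure associated with `(M, D)`: a compactly supported
Borel probability measure satisfying `μ = (1/#D) ∑_{d ∈ D} μ ∘ φ_d⁻¹`,
where `φ_d x = M⁻¹(x + d)`. -/
def IsSelfAffineMeasure {n : ℕ} (M : Matrix (Fin n) (Fin n) ℝ) (D : Finset (Fin n → ℝ))
    (μ : Measure (Fin n → ℝ)) : Prop :=
  IsProbabilityMeasure μ ∧
  (∃ K : Set (Fin n → ℝ), IsCompact K ∧ μ Kᶜ = 0) ∧
  μ = (D.card : ℝ≥0∞)⁻¹ • ∑ d ∈ D, μ.map (fun x => M⁻¹.mulVec (x + d))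

/-- Coordinatewise cast of an integer vector to a real vector. -/
def intCast {n : ℕ} (v : Fin n → ℤ) : Fin n → ℝ := fun i => (v i : ℝ)

/-- The matrix `H = N^{-1/2} (e^{2πi⟨M⁻¹d, s⟩})_{d ∈ D, s ∈ S}`. -/
def hadamardH {n : ℕ} (M : Matrix (Fin n) (Fin n) ℤ) (D S : Finset (Fin n → ℤ)) :
    Matrix D S ℂ := fun d s =>
  (Real.sqrt (D.card) : ℂ)⁻¹ *
    Complex.exp (2 * Real.pi * Complex.I *
      Complex.ofReal (∑ i, ((M.map (Int.cast : ℤ → ℝ))⁻¹.mulVec (intCast d.1)) i * ((s.1 i : ℝ))))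

/-- `(M, D, S)` is a Hadamard triple: `#D = #S` and
`H = N^{-1/2}(e^{2πi⟨M⁻¹d,s⟩})` is unitary. -/
def IsHadamardTriple {n : ℕ} (M : Matrix (Fin n) (Fin n) ℤ) (D S : Finset (Fin n → ℤ)) :
    Prop :=
  D.card = S.card ∧ (hadamardH M D S)ᴴ * hadamardH M D S = 1

/-- `(M, D)` is admissible: there is `S ⊂ ℤⁿ` such that `(M, D, S)` is a Hadamard triple. -/
def IsAdmissible {n : ℕ} (M : Matrix (Fin n) (Fin n) ℤ) (D : Finset (Fin n → ℤ)) : Prop :=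
  ∃ S : Finset (Fin n → ℤ), IsHadamardTriple M D S

/-- The mask polynomial `m_D(x) = (1/#D) ∑_{d∈D} e^{2πi⟨d,x⟩}` of a finite set `D`. -/
def maskPoly {n : ℕ} (D : Finset (Fin n → ℝ)) (x : Fin n → ℝ) : ℂ :=
  (D.card : ℂ)⁻¹ * ∑ d ∈ D, Complex.exp (2 * Real.pi * Complex.I * Complex.ofReal (∑ i, d i * x i))

/-- The Fourier transform `μ̂(ξ) = ∫ e^{2πi⟨x,ξ⟩} dμ(x)`. -/
def fourierMeasure {n : ℕ} (μ : Measure (Fin n → ℝ)) (ξ : Fin n → ℝ) : ℂ :=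
  ∫ x, expChar ξ x ∂μ

/-- The sets `T_{η,0}, T_{η,1}, T_{η,2}, T_{η,3}` associated with positive odd
integers `α, β`, `ω ∈ ℤ` and `η ≥ 0`:
`T_{η,i} = {(2^η(2k+δᵢ)β, (2k'+εᵢ)α − (2k+δᵢ)ω)ᵗ/(2^{η+1}αβ) : 0 ≤ k < α, 0 ≤ k' < 2^η β}`
where `δᵢ = i % 2` and `εᵢ = i / 2`. -/
def Tset (α β ω : ℤ) (η : ℕ) (i : Fin 4) : Set (Fin 2 → ℝ) :=
  { v | ∃ k k' : ℤ, 0 ≤ k ∧ k < α ∧ 0 ≤ k' ∧ k' < 2 ^ η * β ∧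
      v = ((2 : ℝ) ^ (η + 1) * (α : ℝ) * (β : ℝ))⁻¹ •
        intCast ![2 ^ η * (2 * k + ((i.val % 2 : ℕ) : ℤ)) * β,
          (2 * k' + ((i.val / 2 : ℕ) : ℤ)) * α - (2 * k + ((i.val % 2 : ℕ) : ℤ)) * ω] }
/-- The scaling constant `2^{η+1}αβ`, as a real number. -/
def cconst (α β : ℤ) (η : ℕ) : ℝ := (2 : ℝ) ^ (η + 1) * (α : ℝ) * (β : ℝ)
section AuxLemmas
variable {n : ℕ}


lemma expChar_continuous (l : Fin n → ℝ) : Continuous (expChar l) := by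
  unfold expChar; fun_prop

lemma abs_expChar (l x : Fin n → ℝ) : ‖expChar l x‖ = 1 := by
  unfold expChar
  rw [Complex.norm_exp]
  norm_num [Complex.mul_re, Complex.mul_im]

lemma conj_mul_expChar (a b x : Fin n → ℝ) :
    (starRingEnd ℂ) (expChar a x) * expChar b x = expChar (b - a) x := by
  unfold expChar
  rw [← Complex.exp_conj, ← Complex.exp_add]
  congr 1
  have h : ∑ i, (b - a) i * x i = ∑ i, b i * x i - ∑ i, a i * x i := by
    simp [sub_mul, Finset.sum_sub_distrib]
  rw [h]
  simp only [_root_.map_mul, Complex.conj_I, Complex.conj_ofReal, map_ofNat]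
  push_cast
  ring

lemma expChar_zero (x : Fin n → ℝ) : expChar 0 x = 1 := by
  simp [expChar]

lemma expChar_smul_inv {c : ℝ} (hc : c ≠ 0) (v : Fin n → ℝ) (x : Fin n → ℝ) :
    expChar (c • v) (c⁻¹ • x) = expChar v x := by
  unfold expChar
  congr 2
  norm_cast
  apply Finset.sum_congr rfl
  intro i _
  simp only [Pi.smul_apply, smul_eq_mul]
  field_simp

lemma expChar_add_arg (l x y : Fin n → ℝ) :
    expChar l (x + y) = expChar l x * expChar l y := by
  unfold expChar
  rw [← Complex.exp_add]
  congr 1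
  have h : ∑ i, l i * (x + y) i = (∑ i, l i * x i) + ∑ i, l i * y i := by
    simp [mul_add, Finset.sum_add_distrib]
  rw [h]
  push_cast
  ring

lemma expChar_intCast_intCast (ζ d : Fin n → ℤ) :
    expChar (intCast ζ) (intCast d) = 1 := by
  unfold expChar intCast
  have h : ∑ i, ((ζ i : ℝ) * (d i : ℝ)) = ((∑ i, ζ i * d i : ℤ) : ℝ) := by
    push_cast; ring
  rw [h]
  rw [show (2 * (Real.pi:ℂ) * Complex.I * (((∑ i, ζ i * d i : ℤ) : ℝ) : ℂ))
      = ((∑ i, ζ i * d i : ℤ) : ℂ) * (2 * Real.pi * Complex.I) by push_cast; ring]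
  exact Complex.exp_int_mul_two_pi_mul_I _

lemma memLp_expChar (μ : Measure (Fin n → ℝ)) [IsFiniteMeasure μ] (l : Fin n → ℝ) :
    MemLp (expChar l) 2 μ :=
  MemLp.of_bound (expChar_continuous l).aestronglyMeasurable 1
    (Filter.Eventually.of_forall fun x => by
      rw [abs_expChar])

lemma integrable_expChar (μ : Measure (Fin n → ℝ)) [IsFiniteMeasure μ] (l : Fin n → ℝ) :
    Integrable (expChar l) μ :=
  memLp_one_iff_integrable.mp
    (MemLp.of_bound (expChar_continuous l).aestronglyMeasurable 1
      (Filter.Eventually.of_forall fun x => by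
        rw [abs_expChar]))

end AuxLemmas

theorem spectrum_component_is_orthogonal_set
    (α β ω : ℤ) (hα : Odd α) (hβ : Odd β) (hαpos : 0 < α) (hβpos : 0 < β) (η : ℕ)
    (Dt : Finset (Fin 2 → ℤ))
    (hDt : Dt = {![0, 0], ![α, 0], ![ω, 2 ^ η * β], ![-α - ω, -(2 ^ η * β)]})
    (Mt : Matrix (Fin 2) (Fin 2) ℤ) (hMt : Expansive (Mt.map (Int.cast : ℤ → ℝ)))
    (μ : Measure (Fin 2 → ℝ))
    (hμ : IsSelfAffineMeasure (Mt.map (Int.cast : ℤ → ℝ)) (Dt.image intCast) μ)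
    (μAMD : Measure (Fin 2 → ℝ))
    (hAMD : μAMD =
      ((((Dt.card : ℝ≥0∞)⁻¹ • ∑ d ∈ Dt,
          Measure.dirac ((cconst α β η)⁻¹ • intCast d)).prod
        (μ.map (fun x => (cconst α β η)⁻¹ • x))).map (fun p => p.1 + p.2)))
    (Λ : Set (Fin 2 → ℝ)) (hΛint : Λ ⊆ Set.range intCast)
    (h0 : (0 : Fin 2 → ℝ) ∈ Λ) (hspec : IsSpectrum μAMD Λ)
    (s : Fin 2 → ℤ) (hs : 0 ≤ s 0 ∧ s 0 < 2 ^ η * β ∧ 0 ≤ s 1 ∧ s 1 < α)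
    (l : Fin 2 → ℝ) (hlT : l ∈ ⋃ i : Fin 4, Tset α β ω η i)
    (Λsl : Set (Fin 2 → ℤ))
    (hΛsl : Λsl =
      {γ : Fin 2 → ℤ | intCast s + cconst α β η • l + cconst α β η • intCast γ ∈ Λ})
    (hne : Λsl.Nonempty) :
    IsOrthogonalSet μ (intCast '' Λsl) := by
  classical
  haveI hμprob : IsProbabilityMeasure μ := hμ.1
  have hcpos : (0 : ℝ) < cconst α β η := by
    unfold cconst
    have h1 : (0:ℝ) < (α:ℝ) := by exact_mod_cast hαpos
    have h2 : (0:ℝ) < (β:ℝ) := by exact_mod_cast hβpos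
    positivity
  have hcne : cconst α β η ≠ 0 := ne_of_gt hcpos
  have hcardne : Dt.card ≠ 0 := by
    apply Finset.card_ne_zero_of_mem (a := ![0,0])
    rw [hDt]; simp
  -- the measure ν₁
  set ν₁ : Measure (Fin 2 → ℝ) :=
    (Dt.card : ℝ≥0∞)⁻¹ • ∑ d ∈ Dt, Measure.dirac ((cconst α β η)⁻¹ • intCast d) with hν₁def
  set ν₂ : Measure (Fin 2 → ℝ) := μ.map (fun x => (cconst α β η)⁻¹ • x) with hν₂def
  haveI : IsFiniteMeasure ν₁ := by
    constructor
    rw [hν₁def]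
    rw [Measure.smul_apply, Measure.finset_sum_apply]
    simp only [measure_univ, Finset.sum_const, smul_eq_mul, nsmul_eq_mul, mul_one]
    rw [ENNReal.inv_mul_cancel (by exact_mod_cast hcardne) (ENNReal.natCast_ne_top _)]
    exact ENNReal.one_lt_top
  haveI : IsProbabilityMeasure ν₂ :=
    Measure.isProbabilityMeasure_map (by fun_prop)
  -- key claim
  have key : ∀ γ ∈ Λsl, ∀ γ' ∈ Λsl, γ ≠ γ' →
      ∫ x, expChar (intCast γ' - intCast γ) x ∂μ = 0 := by
    intro γ hγ γ' hγ' hne'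
    rw [hΛsl] at hγ hγ'
    obtain ⟨bS, hbS, hON, -⟩ := hspec
    set u : Fin 2 → ℝ := intCast s + cconst α β η • l + cconst α β η • intCast γ with hu
    set u' : Fin 2 → ℝ := intCast s + cconst α β η • l + cconst α β η • intCast γ' with hu'
    have hneu : u ≠ u' := by
      intro h
      apply hne'
      rw [hu, hu'] at h
      have h2 : cconst α β η • intCast γ = cconst α β η • intCast γ' := by
        have := add_left_cancel h
        exact this
      have h3 : intCast γ = intCast γ' := smul_right_injective _ hcne h2
      funext i
      have h4 := congrFun h3 i
      simp only [intCast] at h4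
      exact_mod_cast h4
    have hinner : (inner ℂ (bS ⟨u, hγ⟩) (bS ⟨u', hγ'⟩) : ℂ) = 0 :=
      hON.2 (fun h => hneu (congrArg Subtype.val h))
    rw [MeasureTheory.L2.inner_def] at hinner
    have hcongr : ∫ a, (inner ℂ ((bS ⟨u, hγ⟩ : Lp ℂ 2 μAMD) a) ((bS ⟨u', hγ'⟩ : Lp ℂ 2 μAMD) a) : ℂ) ∂μAMD
        = ∫ a, expChar (u' - u) a ∂μAMD := by
      apply integral_congr_ae
      filter_upwards [hbS ⟨u, hγ⟩, hbS ⟨u', hγ'⟩] with a h1 h2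
      rw [h1, h2, RCLike.inner_apply', conj_mul_expChar]
    rw [hcongr] at hinner
    have huu : u' - u = cconst α β η • intCast (γ' - γ) := by
      rw [hu, hu']
      funext i
      simp only [Pi.add_apply, Pi.sub_apply, Pi.smul_apply, smul_eq_mul, intCast, Pi.sub_apply]
      push_cast
      ring
    rw [huu, hAMD] at hinner
    rw [integral_map (by fun_prop) (expChar_continuous _).aestronglyMeasurable] at hinner
    simp only [expChar_add_arg] at hinner
    rw [integral_prod_mul (μ := ν₁) (ν := ν₂)
      (f := fun x => expChar (cconst α β η • intCast (γ' - γ)) x)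
      (g := fun y => expChar (cconst α β η • intCast (γ' - γ)) y)] at hinner
    have hν₁int : ∫ x, expChar (cconst α β η • intCast (γ' - γ)) x ∂ν₁ = 1 := by
      rw [hν₁def, integral_smul_measure,
        integral_finset_sum_measure (fun d _ => integrable_expChar _ _)]
      have : ∀ d ∈ Dt, ∫ x, expChar (cconst α β η • intCast (γ' - γ)) x
          ∂(Measure.dirac ((cconst α β η)⁻¹ • intCast d)) = 1 := by
        intro d _
        rw [integral_dirac]
        rw [expChar_smul_inv hcne, expChar_intCast_intCast]
      rw [Finset.sum_congr rfl this]
      simp only [Finset.sum_const, nsmul_eq_mul, mul_one]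
      rw [ENNReal.toReal_inv, ENNReal.toReal_natCast, Complex.real_smul,
        Complex.ofReal_inv, Complex.ofReal_natCast,
        inv_mul_cancel₀ (by exact_mod_cast hcardne)]
    have hν₂int : ∫ y, expChar (cconst α β η • intCast (γ' - γ)) y ∂ν₂
        = ∫ x, expChar (intCast γ' - intCast γ) x ∂μ := by
      rw [hν₂def, integral_map (by fun_prop) (expChar_continuous _).aestronglyMeasurable]
      congr 1
      funext x
      rw [expChar_smul_inv hcne]
      congr 1
      funext i
      simp [intCast]
    rw [hν₁int, hν₂int, one_mul] at hinner
    exact hinner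
  -- build the orthonormal family
  refine ⟨fun p => (memLp_expChar μ (p : Fin 2 → ℝ)).toLp _,
    fun p => MemLp.coeFn_toLp _, ?_⟩
  rw [orthonormal_iff_ite]
  intro i j
  rw [MeasureTheory.L2.inner_def]
  have hcongr : ∫ a, (inner ℂ (((memLp_expChar μ (i : Fin 2 → ℝ)).toLp _ : Lp ℂ 2 μ) a)
        (((memLp_expChar μ (j : Fin 2 → ℝ)).toLp _ : Lp ℂ 2 μ) a) : ℂ) ∂μ
      = ∫ a, expChar ((j : Fin 2 → ℝ) - (i : Fin 2 → ℝ)) a ∂μ := by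
    apply integral_congr_ae
    filter_upwards [MemLp.coeFn_toLp (memLp_expChar μ (i : Fin 2 → ℝ)),
      MemLp.coeFn_toLp (memLp_expChar μ (j : Fin 2 → ℝ))] with a h1 h2
    rw [h1, h2, RCLike.inner_apply', conj_mul_expChar]
  rw [hcongr]
  by_cases hij : i = j
  · subst hij
    simp only [sub_self, expChar_zero, if_pos rfl]
    simp [integral_const, measure_univ]
  · rw [if_neg hij]
    obtain ⟨γ, hγ, hγeq⟩ := i.2
    obtain ⟨γ', hγ', hγ'eq⟩ := j.2
    have hgne : γ ≠ γ' := by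
      intro h
      apply hij
      apply Subtype.ext
      rw [← hγeq, ← hγ'eq, h]
    rw [← hγeq, ← hγ'eq]
    exact key γ hγ γ' hγ' hgne

end
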